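/- arXiv:1702.01129 — 2 statements merged into one kernel-verified Lean document; each statement's English description precedes it below -/
import Mathlib

section
/- For the geometric series with ratio -q where 0 ≤ q ≤ 1, the first-level transformed partial sums s¹(n) = (1/2)·s⁰(n) + (1/4)·s⁰(n-1) + (1/4)·s⁰(n+1), with s⁰(n) = ∑_{k=0}^n (-q)^k, converge to 1/(1+q) as n → ∞, including at q = 1 where the original series diverges. -/
theorem stmt_5 (q : ℝ) (hq0 : 0 ≤ q) (hq1 : q ≤ 1)
    (s0 : ℕ → ℝ) (hs0 : ∀ n, s0 n = ∑ k ∈ Finset.range (n + 1), (-q) ^ k)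
    (s1 : ℕ → ℝ)
    (hs1 : ∀ n, 1 ≤ n → s1 n = (1/2) * s0 n + (1/4) * s0 (n - 1) + (1/4) * s0 (n + 1)) :
    Filter.Tendsto s1 Filter.atTop (nhds (1 / (1 + q))) := by
  have h1q : (0:ℝ) < 1 + q := by linarith
  have hne : (-q : ℝ) ≠ 1 := by nlinarith
  have key : ∀ n, 1 ≤ n →
      s1 n = 1/(1+q) - (-q)^n * ((1-q)^2/(4*(1+q))) := by
    intro n hn
    rw [hs1 n hn, hs0, hs0, hs0, Nat.sub_add_cancel hn,
      geom_sum_eq hne, geom_sum_eq hne, geom_sum_eq hne]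
    have hq' : (-q) - 1 ≠ 0 := by nlinarith
    field_simp
    ring
  have hc : Filter.Tendsto (fun n : ℕ => 1/(1+q) - (-q)^n * ((1-q)^2/(4*(1+q))))
      Filter.atTop (nhds (1/(1+q))) := by
    rcases eq_or_lt_of_le hq1 with h | h
    · simp [← h]
    · have habs : |(-q : ℝ)| < 1 := by rw [abs_neg, abs_of_nonneg hq0]; exact h
      have := (tendsto_pow_atTop_nhds_zero_of_abs_lt_one habs).mul_const
        ((1-q)^2/(4*(1+q)))
      have h2 := (tendsto_const_nhds (x := 1/(1+q)) (f := Filter.atTop (α := ℕ))).sub this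
      simpa using h2
  refine hc.congr' ?_
  filter_upwards [Filter.eventually_ge_atTop 1] with n hn
  exact (key n hn).symm
end

section
/- The coefficients c_{k,j} in the representation s^j(j) = ∑_{k=0}^{2j} c_{k,j}·a_k satisfy c_{0,j} = 1 for all j ≥ 0, and 0 ≤ c_{k,j} ≤ 1 for all 0 ≤ k ≤ 2j. -/
noncomputable def transform (s : ℕ → ℝ) (n : ℕ) : ℝ :=
  (1/2) * s n + (1/4) * s (n - 1) + (1/4) * s (n + 1)

noncomputable def sj (a : ℕ → ℝ) : ℕ → ℕ → ℝ
  | 0 => fun n => ∑ k ∈ Finset.range (n + 1), a k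
  | j + 1 => transform (sj a j)

lemma sj_bounds (a : ℕ → ℝ) (h : ∀ n, 0 ≤ ∑ k ∈ Finset.range (n + 1), a k ∧
    (∑ k ∈ Finset.range (n + 1), a k) ≤ 1) :
    ∀ j n, 0 ≤ sj a j n ∧ sj a j n ≤ 1 := by
  intro j
  induction j with
  | zero => exact h
  | succ j ih =>
    intro n
    have h1 := ih n
    have h2 := ih (n - 1)
    have h3 := ih (n + 1)
    simp only [sj, transform]
    constructor <;> linarith [h1.1, h1.2, h2.1, h2.2, h3.1, h3.2]

lemma sj_const (a : ℕ → ℝ) (h : ∀ n, (∑ k ∈ Finset.range (n + 1), a k) = 1) :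
    ∀ j n, sj a j n = 1 := by
  intro j
  induction j with
  | zero => exact h
  | succ j ih =>
    intro n
    simp only [sj, transform, ih]
    ring

theorem stmt_9 (j : ℕ) (c : ℕ → ℝ)
    (hc : ∀ a : ℕ → ℝ, sj a j j = ∑ k ∈ Finset.range (2 * j + 1), c k * a k) :
    c 0 = 1 ∧ ∀ k ≤ 2 * j, 0 ≤ c k ∧ c k ≤ 1 := by
  have key : ∀ k, k ≤ 2 * j → c k = sj (fun i => if i = k then 1 else 0) j j := by
    intro k hk
    have := hc (fun i => if i = k then 1 else 0)
    rw [this]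
    rw [Finset.sum_eq_single k]
    · simp
    · intro b _ hb; simp [hb]
    · intro hnb; exact absurd (Finset.mem_range.mpr (by omega)) hnb
  constructor
  · rw [key 0 (by omega)]
    apply sj_const
    intro n
    rw [Finset.sum_eq_single 0]
    · simp
    · intro b _ hb; simp [hb]
    · simp
  · intro k hk
    rw [key k hk]
    apply sj_bounds
    intro n
    by_cases hkn : k < n + 1
    · rw [Finset.sum_eq_single k]
      · simp
      · intro b _ hb; simp [hb]
      · intro hnb; exact absurd (Finset.mem_range.mpr hkn) hnb
    · rw [Finset.sum_eq_zero]
      · norm_num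
      · intro b hb
        simp only [Finset.mem_range] at hb
        have : b ≠ k := by omega
        simp [this]
end
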